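/- If the pairwise comparison system is consistent (a_{bi} · a_{iw} = a_{bw} for all i ∈ D), then the unique normalized solution of the system w_b/w_i = a_{bi}, w_i/w_w = a_{iw}, w_b/w_w = a_{bw}, Σw_i = 1 is given by w_i = a_{iw} / (Σ_{j=1}^n a_{jw}) for all i, where a_{ww} = 1 and a_{bw} is the weight ratio for the best criterion. -/

import Mathlib

open Finset

/-- Under consistency, the unique normalized solution is w_i = a_{iw}/Σ_j a_{jw},
with the conventions a_{ww} = 1 and a_{bw} for the best criterion. -/
theorem stmt1 (n b w : ℕ) (hn : 3 ≤ n) (hb : b ∈ Icc 1 n) (hw : w ∈ Icc 1 n)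
    (hbw : b ≠ w) (ab aw : ℕ → ℝ) (abw : ℝ)
    (hab : ∀ i ∈ Icc 1 n \ {b, w}, 0 < ab i) (haw0 : ∀ i ∈ Icc 1 n \ {b, w}, 0 < aw i)
    (habw : 0 < abw)
    (hcons : ∀ i ∈ Icc 1 n \ {b, w}, ab i * aw i = abw)
    (awf : ℕ → ℝ) (hawf : ∀ i, awf i = if i = w then 1 else if i = b then abw else aw i) :
    (∀ v : ℕ → ℝ, (∀ i ∈ Icc 1 n, 0 < v i) → (∑ i ∈ Icc 1 n, v i) = 1 →
      (∀ i ∈ Icc 1 n \ {b, w}, v b / v i = ab i ∧ v i / v w = aw i) → v b / v w = abw →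
      ∀ i ∈ Icc 1 n, v i = awf i / ∑ j ∈ Icc 1 n, awf j)
    ∧ (∃ v : ℕ → ℝ, (∀ i ∈ Icc 1 n, 0 < v i) ∧ (∑ i ∈ Icc 1 n, v i) = 1 ∧
      (∀ i ∈ Icc 1 n \ {b, w}, v b / v i = ab i ∧ v i / v w = aw i) ∧ v b / v w = abw ∧
      ∀ i ∈ Icc 1 n, v i = awf i / ∑ j ∈ Icc 1 n, awf j) := by
  -- positivity of awf on Icc 1 n
  have hawfpos : ∀ i ∈ Icc 1 n, 0 < awf i := by
    intro i hi
    rw [hawf i]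
    by_cases h1 : i = w
    · simp [h1]
    by_cases h2 : i = b
    · subst h2; simp [hbw, habw]
    · simp only [h1, h2, if_false]
      exact haw0 i (by simp [hi, h1, h2])
  set S := ∑ j ∈ Icc 1 n, awf j with hS
  have hSpos : 0 < S := Finset.sum_pos hawfpos ⟨w, hw⟩
  have hSne : S ≠ 0 := ne_of_gt hSpos
  -- uniqueness part
  have uniq : ∀ v : ℕ → ℝ, (∀ i ∈ Icc 1 n, 0 < v i) → (∑ i ∈ Icc 1 n, v i) = 1 →
      (∀ i ∈ Icc 1 n \ {b, w}, v b / v i = ab i ∧ v i / v w = aw i) → v b / v w = abw →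
      ∀ i ∈ Icc 1 n, v i = awf i / S := by
    intro v hvpos hvsum hvr hvbw
    have hvw : 0 < v w := hvpos w hw
    have key : ∀ i ∈ Icc 1 n, v i = awf i * v w := by
      intro i hi
      rw [hawf i]
      by_cases h1 : i = w
      · simp [h1]
      by_cases h2 : i = b
      · subst h2
        rw [if_neg h1, if_pos rfl]
        field_simp at hvbw
        linarith [hvbw]
      · simp only [h1, h2, if_false]
        have := (hvr i (by simp [hi, h1, h2])).2
        field_simp at this
        linarith [this]
    have hsum : (1:ℝ) = S * v w := by
      rw [← hvsum, hS, Finset.sum_mul]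
      exact Finset.sum_congr rfl key
    have hvw' : v w = 1 / S := by
      field_simp at hsum ⊢
      linarith
    intro i hi
    rw [key i hi, hvw']
    field_simp
  refine ⟨uniq, ⟨fun i => awf i / S, ?_, ?_, ?_, ?_, fun i _ => rfl⟩⟩
  · intro i hi; exact div_pos (hawfpos i hi) hSpos
  · rw [← Finset.sum_div]; field_simp; exact hS.symm
  · intro i hi
    have hiI : i ∈ Icc 1 n := (Finset.mem_sdiff.mp hi).1
    have hinw : i ≠ w := by
      intro h; exact (Finset.mem_sdiff.mp hi).2 (by simp [h])
    have hinb : i ≠ b := by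
      intro h; exact (Finset.mem_sdiff.mp hi).2 (by simp [h])
    have hipos := hawfpos i hiI
    have hawi : awf i = aw i := by rw [hawf i]; simp [hinw, hinb]
    have hawb : awf b = abw := by rw [hawf b]; simp [hbw]
    have haww : awf w = 1 := by rw [hawf w]; simp
    constructor
    · show awf b / S / (awf i / S) = ab i
      rw [div_div_div_cancel_right₀ hSne, hawb, hawi]
      have h1 := hcons i hi
      have h2 := haw0 i hi
      field_simp
      linarith [h1]
    · show awf i / S / (awf w / S) = aw i
      rw [div_div_div_cancel_right₀ hSne, haww, hawi, div_one]
  · show awf b / S / (awf w / S) = abw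
    rw [div_div_div_cancel_right₀ hSne, hawf b, hawf w]; simp [hbw]
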